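/- For any two positive semidefinite Hermitian matrices A and B of the same size, and for every index j, the j-th largest eigenvalue of AB satisfies λ_j(AB) ≥ λ_min(B) · λ_j(A). -/

import Mathlib

open Matrix
open scoped InnerProductSpace
open scoped ComplexOrder

variable {n : ℕ} {M : Matrix (Fin n) (Fin n) ℂ}

lemma toEuclideanLin_eigvec (hM : M.IsHermitian) (i : Fin n) :
    Matrix.toEuclideanLin M (hM.eigenvectorBasis i) =
      hM.eigenvalues i • hM.eigenvectorBasis i := by
  apply (WithLp.equiv 2 (Fin n → ℂ)).injective
  simpa [Matrix.toEuclideanLin_apply] using hM.mulVec_eigenvectorBasis i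

lemma inner_toEuclideanLin_eig (hM : M.IsHermitian) (x : EuclideanSpace ℂ (Fin n)) (i : Fin n) :
    ⟪hM.eigenvectorBasis i, Matrix.toEuclideanLin M x⟫_ℂ =
      (hM.eigenvalues i : ℂ) * ⟪hM.eigenvectorBasis i, x⟫_ℂ := by
  have hS := (Matrix.isHermitian_iff_isSymmetric.mp hM)
  rw [← hS (hM.eigenvectorBasis i) x, toEuclideanLin_eigvec hM i,
    RCLike.real_smul_eq_coe_smul (K := ℂ), inner_smul_left]
  simp

lemma quad_re_eq (hM : M.IsHermitian) (x : EuclideanSpace ℂ (Fin n)) :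
    (⟪x, Matrix.toEuclideanLin M x⟫_ℂ).re =
      ∑ i, hM.eigenvalues i * Complex.normSq ⟪hM.eigenvectorBasis i, x⟫_ℂ := by
  rw [← hM.eigenvectorBasis.sum_inner_mul_inner x (Matrix.toEuclideanLin M x)]
  rw [Complex.re_sum]
  refine Finset.sum_congr rfl fun i _ => ?_
  rw [inner_toEuclideanLin_eig hM x i]
  set c := ⟪hM.eigenvectorBasis i, x⟫_ℂ with hc
  have h1 : ⟪x, hM.eigenvectorBasis i⟫_ℂ = (starRingEnd ℂ) c := by
    rw [hc, ← inner_conj_symm]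
  have h2 : (starRingEnd ℂ) c * ((hM.eigenvalues i : ℂ) * c)
      = ((hM.eigenvalues i * Complex.normSq c : ℝ) : ℂ) := by
    push_cast [Complex.normSq_eq_conj_mul_self]; ring
  rw [h1, h2, Complex.ofReal_re]

lemma norm_re_eq (x : EuclideanSpace ℂ (Fin n))
    (b : OrthonormalBasis (Fin n) ℂ (EuclideanSpace ℂ (Fin n))) :
    (⟪x, x⟫_ℂ).re = ∑ i, Complex.normSq ⟪b i, x⟫_ℂ := by
  rw [← b.sum_inner_mul_inner x x, Complex.re_sum]
  refine Finset.sum_congr rfl fun i _ => ?_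
  set c := ⟪b i, x⟫_ℂ with hc
  have h1 : ⟪x, b i⟫_ℂ = (starRingEnd ℂ) c := by rw [hc, ← inner_conj_symm]
  rw [h1, ← Complex.normSq_eq_conj_mul_self]
  simp

lemma inner_zero_of_mem_span (b : OrthonormalBasis (Fin n) ℂ (EuclideanSpace ℂ (Fin n)))
    {S : Finset (Fin n)} {x : EuclideanSpace ℂ (Fin n)}
    (hx : x ∈ Submodule.span ℂ (⇑b '' ↑S)) {i : Fin n} (hi : i ∉ S) :
    ⟪b i, x⟫_ℂ = 0 := by
  induction hx using Submodule.span_induction with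
  | mem y hy =>
      obtain ⟨s, hs, rfl⟩ := hy
      exact b.orthonormal.2 (fun h => hi (h ▸ hs))
  | zero => simp
  | add y z _ _ hy hz => rw [inner_add_right, hy, hz, add_zero]
  | smul c y _ hy => rw [inner_smul_right, hy, mul_zero]

lemma quad_le_of_mem_span (hM : M.IsHermitian) {S : Finset (Fin n)} {t : ℝ}
    (ht : ∀ i ∈ S, hM.eigenvalues i ≤ t) {x : EuclideanSpace ℂ (Fin n)}
    (hx : x ∈ Submodule.span ℂ (⇑hM.eigenvectorBasis '' ↑S)) :
    (⟪x, Matrix.toEuclideanLin M x⟫_ℂ).re ≤ t * (⟪x, x⟫_ℂ).re := by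
  rw [quad_re_eq hM x, norm_re_eq x hM.eigenvectorBasis, Finset.mul_sum]
  refine Finset.sum_le_sum fun i _ => ?_
  by_cases hi : i ∈ S
  · exact mul_le_mul_of_nonneg_right (ht i hi) (Complex.normSq_nonneg _)
  · rw [inner_zero_of_mem_span hM.eigenvectorBasis hx hi]
    simp

lemma le_quad_of_mem_span (hM : M.IsHermitian) {S : Finset (Fin n)} {s : ℝ}
    (ht : ∀ i ∈ S, s ≤ hM.eigenvalues i) {x : EuclideanSpace ℂ (Fin n)}
    (hx : x ∈ Submodule.span ℂ (⇑hM.eigenvectorBasis '' ↑S)) :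
    s * (⟪x, x⟫_ℂ).re ≤ (⟪x, Matrix.toEuclideanLin M x⟫_ℂ).re := by
  rw [quad_re_eq hM x, norm_re_eq x hM.eigenvectorBasis, Finset.mul_sum]
  refine Finset.sum_le_sum fun i _ => ?_
  by_cases hi : i ∈ S
  · exact mul_le_mul_of_nonneg_right (ht i hi) (Complex.normSq_nonneg _)
  · rw [inner_zero_of_mem_span hM.eigenvectorBasis hx hi]
    simp

lemma finrank_span_onb (b : OrthonormalBasis (Fin n) ℂ (EuclideanSpace ℂ (Fin n)))
    (S : Finset (Fin n)) :
    Module.finrank ℂ (Submodule.span ℂ (⇑b '' ↑S)) = S.card := by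
  classical
  have hli : LinearIndependent ℂ ((↑) : (⇑b '' ↑S) → EuclideanSpace ℂ (Fin n)) := by
    apply LinearIndepOn.id_image
    exact (b.orthonormal.linearIndependent).comp _ Subtype.val_injective
  rw [finrank_span_set_eq_card hli]
  rw [Set.toFinset_image]
  rw [Finset.card_image_of_injective _ b.orthonormal.linearIndependent.injective]
  simp

lemma toEuclideanLin_mul_apply (P Q : Matrix (Fin n) (Fin n) ℂ) (x : EuclideanSpace ℂ (Fin n)) :
    Matrix.toEuclideanLin (P * Q) x = Matrix.toEuclideanLin P (Matrix.toEuclideanLin Q x) := by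
  apply (WithLp.equiv 2 (Fin n → ℂ)).injective
  simp [Matrix.toEuclideanLin_apply, Matrix.mulVec_mulVec]

lemma toEuclideanLin_injective {M : Matrix (Fin n) (Fin n) ℂ} (hU : IsUnit M) :
    Function.Injective (Matrix.toEuclideanLin M) := by
  intro x y h
  have h2 : M *ᵥ (WithLp.equiv 2 (Fin n → ℂ) x) = M *ᵥ (WithLp.equiv 2 (Fin n → ℂ) y) := by
    simpa [Matrix.toEuclideanLin_apply] using congrArg (WithLp.equiv 2 (Fin n → ℂ)) h
  exact (WithLp.equiv 2 (Fin n → ℂ)).injective (Matrix.mulVec_injective_iff_isUnit.mpr hU h2)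

lemma inner_self_re_pos {x : EuclideanSpace ℂ (Fin n)} (hx : x ≠ 0) :
    0 < (⟪x, x⟫_ℂ).re := by
  have := inner_self_eq_norm_sq (𝕜 := ℂ) x
  rw [RCLike.re_to_complex] at this
  rw [this]
  have : (0:ℝ) < ‖x‖ := norm_pos_iff.mpr hx
  positivity

lemma mem_span_univ (b : OrthonormalBasis (Fin n) ℂ (EuclideanSpace ℂ (Fin n)))
    (x : EuclideanSpace ℂ (Fin n)) :
    x ∈ Submodule.span ℂ (⇑b '' ↑(Finset.univ : Finset (Fin n))) := by
  rw [Finset.coe_univ, Set.image_univ, ← OrthonormalBasis.coe_toBasis, b.toBasis.span_eq]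
  trivial

/-- The square root of a positive semidefinite matrix, as defined in Mathlib (Dec 2024). -/
noncomputable def Matrix.PosSemidef.sqrt {m : Type*} [Fintype m] [DecidableEq m] {𝕜 : Type*}
    [RCLike 𝕜] {A : Matrix m m 𝕜} (hA : A.PosSemidef) : Matrix m m 𝕜 :=
  hA.1.eigenvectorUnitary.1 * diagonal ((↑) ∘ (Real.sqrt ∘ hA.1.eigenvalues)) *
  (star hA.1.eigenvectorUnitary : Matrix m m 𝕜)

/-- The `j`-th largest eigenvalue of a Hermitian matrix (eigenvalues sorted decreasingly). -/
noncomputable def eigDesc {n : ℕ} {A : Matrix (Fin n) (Fin n) ℂ} (hA : A.IsHermitian) :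
    Fin n → ℝ :=
  fun j => (hA.eigenvalues ∘ ⇑(Tuple.sort hA.eigenvalues)) j.rev

theorem Matrix.PosSemidef.posSemidef_sqrt {m : Type*} [Fintype m] [DecidableEq m] {𝕜 : Type*}
    [RCLike 𝕜] {A : Matrix m m 𝕜} (hA : A.PosSemidef) : hA.sqrt.PosSemidef := by
  unfold Matrix.PosSemidef.sqrt
  have h := (posSemidef_diagonal_iff.mpr fun i => ?_ :
    (diagonal ((RCLike.ofReal : ℝ → 𝕜) ∘ (Real.sqrt ∘ hA.1.eigenvalues))).PosSemidef).mul_mul_conjTranspose_same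
    (hA.1.eigenvectorUnitary : Matrix m m 𝕜)
  · simpa [Matrix.star_eq_conjTranspose] using h
  · rw [Function.comp_apply, RCLike.nonneg_iff]
    constructor
    · simp only [RCLike.ofReal_re]; exact Real.sqrt_nonneg _
    · simp only [RCLike.ofReal_im]

theorem Matrix.PosSemidef.sqrt_mul_self {m : Type*} [Fintype m] [DecidableEq m] {𝕜 : Type*}
    [RCLike 𝕜] {A : Matrix m m 𝕜} (hA : A.PosSemidef) : hA.sqrt * hA.sqrt = A := by
  unfold Matrix.PosSemidef.sqrt
  conv_rhs => rw [hA.1.spectral_theorem, Unitary.conjStarAlgAut_apply]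
  have hU : (star hA.1.eigenvectorUnitary : Matrix m m 𝕜) * hA.1.eigenvectorUnitary.1 = 1 :=
    Unitary.coe_star_mul_self _
  simp only [mul_assoc]
  rw [← mul_assoc (star _ : Matrix m m 𝕜), hU, one_mul, ← mul_assoc (diagonal _),
    diagonal_mul_diagonal]
  congr 3
  ext i
  simp only [Function.comp_apply, ← RCLike.ofReal_mul, Real.mul_self_sqrt (hA.eigenvalues_nonneg i)]

/-- For PSD Hermitian `A`, `B`, the `j`-th largest eigenvalue of `A * B`
(identified with the eigenvalues of the Hermitian matrix `√B * A * √B`, to which `A * B`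
is similar) satisfies `λ_j(AB) ≥ λ_min(B) * λ_j(A)`. -/
theorem eigMin_mul_le_eig_mul {n : ℕ} {A B : Matrix (Fin n) (Fin n) ℂ}
    (hA : A.PosSemidef) (hB : B.PosSemidef)
    (hAB : (hB.sqrt * A * hB.sqrt).IsHermitian) (j : Fin n) :
    (⨅ i, hB.1.eigenvalues i) * eigDesc hA.1 j ≤ eigDesc hAB j := by

  classical
  haveI : Nonempty (Fin n) := ⟨j⟩
  set c : ℝ := ⨅ i, hB.1.eigenvalues i with hc
  have hc0 : 0 ≤ c := le_ciInf fun i => hB.eigenvalues_nonneg i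
  have hg0 : 0 ≤ eigDesc hA.1 j := hA.eigenvalues_nonneg _
  have hMpsd : (hB.sqrt * A * hB.sqrt).PosSemidef := by
    have h := hA.mul_mul_conjTranspose_same hB.sqrt
    rwa [hB.posSemidef_sqrt.1] at h
  have hd0 : 0 ≤ eigDesc hAB j := hMpsd.eigenvalues_nonneg _
  rcases eq_or_lt_of_le hc0 with hcz | hcpos
  · rw [← hcz, zero_mul]; exact hd0
  have hdetB : IsUnit hB.sqrt.det := by
    have hm : hB.sqrt.det * hB.sqrt.det = B.det := by rw [← Matrix.det_mul, hB.sqrt_mul_self]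
    have hBdet : B.det ≠ 0 := by
      rw [hB.1.det_eq_prod_eigenvalues]
      refine Finset.prod_ne_zero_iff.mpr fun i _ => ?_
      have hci : c ≤ hB.1.eigenvalues i := ciInf_le (Set.Finite.bddBelow (Set.finite_range _)) i
      have := ne_of_gt (lt_of_lt_of_le hcpos hci)
      simpa using this
    have : hB.sqrt.det ≠ 0 := fun h => by rw [h, mul_zero] at hm; exact hBdet hm.symm
    exact isUnit_iff_ne_zero.mpr this
  have hUsqrt : IsUnit hB.sqrt := (Matrix.isUnit_iff_isUnit_det _).2 hdetB
  have hUinv : IsUnit hB.sqrt⁻¹ := Matrix.isUnit_nonsing_inv_iff.mpr hUsqrt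
  -- subspaces
  set σA := Tuple.sort hA.1.eigenvalues with hσA
  set σM := Tuple.sort hAB.eigenvalues with hσM
  set SA : Finset (Fin n) := (Finset.Ici j.rev).image σA with hSA
  set SM : Finset (Fin n) := (Finset.Iic j.rev).image σM with hSM
  set WA := Submodule.span ℂ (⇑hA.1.eigenvectorBasis '' ↑SA) with hWA
  set WM := Submodule.span ℂ (⇑hAB.eigenvectorBasis '' ↑SM) with hWM
  set f := Matrix.toEuclideanLin hB.sqrt⁻¹ with hf
  have hfinj : Function.Injective f := toEuclideanLin_injective hUinv
  set V1 := Submodule.map f WA with hV1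
  have hrV1 : Module.finrank ℂ V1 = j.val + 1 := by
    rw [hV1, ← (Submodule.equivMapOfInjective f hfinj WA).finrank_eq, hWA,
      finrank_span_onb, hSA, Finset.card_image_of_injective _ σA.injective, Fin.card_Ici,
      Fin.val_rev]
    omega
  have hrWM : Module.finrank ℂ WM = n - j.val := by
    rw [hWM, finrank_span_onb, hSM, Finset.card_image_of_injective _ σM.injective,
      Fin.card_Iic, Fin.val_rev]
    omega
  -- intersection is nontrivial
  have hinter : 0 < Module.finrank ℂ (V1 ⊓ WM : Submodule ℂ (EuclideanSpace ℂ (Fin n))) := by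
    have hsum := Submodule.finrank_sup_add_finrank_inf_eq V1 WM
    have hle : Module.finrank ℂ (V1 ⊔ WM : Submodule ℂ (EuclideanSpace ℂ (Fin n))) ≤ n :=
      le_trans (Submodule.finrank_le _) (le_of_eq finrank_euclideanSpace_fin)
    have hj : j.val < n := j.isLt
    omega
  have : Nontrivial (V1 ⊓ WM : Submodule ℂ (EuclideanSpace ℂ (Fin n))) :=
    Module.finrank_pos_iff.mp hinter
  obtain ⟨⟨x, hxmem⟩, hx0⟩ := exists_ne (0 : (V1 ⊓ WM : Submodule ℂ (EuclideanSpace ℂ (Fin n))))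
  have hxne : x ≠ 0 := fun h => hx0 (Subtype.ext h)
  obtain ⟨hx1, hx2⟩ := Submodule.mem_inf.mp hxmem
  -- z = √B x lies in WA
  set z := Matrix.toEuclideanLin hB.sqrt x with hz
  have hzWA : z ∈ WA := by
    obtain ⟨y, hyWA, hyx⟩ := hx1
    have : z = y := by
      rw [hz, ← hyx, hf, ← toEuclideanLin_mul_apply, Matrix.mul_nonsing_inv _ hdetB]
      simp [Matrix.toEuclideanLin_apply]
    rwa [this]
  -- eigenvalue bounds on the index sets
  have hboundA : ∀ i ∈ SA, eigDesc hA.1 j ≤ hA.1.eigenvalues i := by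
    intro i hi
    obtain ⟨k, hk, rfl⟩ := Finset.mem_image.mp hi
    exact Tuple.monotone_sort hA.1.eigenvalues (Finset.mem_Ici.mp hk)
  have hboundM : ∀ i ∈ SM, hAB.eigenvalues i ≤ eigDesc hAB j := by
    intro i hi
    obtain ⟨k, hk, rfl⟩ := Finset.mem_image.mp hi
    exact Tuple.monotone_sort hAB.eigenvalues (Finset.mem_Iic.mp hk)
  -- quadratic form manipulations
  have hsymB := Matrix.isHermitian_iff_isSymmetric.mp hB.posSemidef_sqrt.1
  have hMx : Matrix.toEuclideanLin (hB.sqrt * A * hB.sqrt) x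
      = Matrix.toEuclideanLin hB.sqrt (Matrix.toEuclideanLin A z) := by
    rw [toEuclideanLin_mul_apply, toEuclideanLin_mul_apply, hz]
  have heq1 : ⟪x, Matrix.toEuclideanLin (hB.sqrt * A * hB.sqrt) x⟫_ℂ
      = ⟪z, Matrix.toEuclideanLin A z⟫_ℂ := by
    rw [hMx, ← hsymB x (Matrix.toEuclideanLin A z), hz]
  have heq2 : (⟪z, z⟫_ℂ) = ⟪x, Matrix.toEuclideanLin B x⟫_ℂ := by
    rw [hz, hsymB x (Matrix.toEuclideanLin hB.sqrt x), ← toEuclideanLin_mul_apply,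
      hB.sqrt_mul_self]
  have hup : (⟪x, Matrix.toEuclideanLin (hB.sqrt * A * hB.sqrt) x⟫_ℂ).re
      ≤ eigDesc hAB j * (⟪x, x⟫_ℂ).re := quad_le_of_mem_span hAB hboundM hx2
  have hlowA : eigDesc hA.1 j * (⟪z, z⟫_ℂ).re ≤ (⟪z, Matrix.toEuclideanLin A z⟫_ℂ).re :=
    le_quad_of_mem_span hA.1 hboundA hzWA
  have hlowB : c * (⟪x, x⟫_ℂ).re ≤ (⟪x, Matrix.toEuclideanLin B x⟫_ℂ).re :=
    le_quad_of_mem_span hB.1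
      (fun i _ => ciInf_le (Set.Finite.bddBelow (Set.finite_range _)) i)
      (mem_span_univ _ _)
  have hxpos : 0 < (⟪x, x⟫_ℂ).re := inner_self_re_pos hxne
  have hchain : c * eigDesc hA.1 j * (⟪x, x⟫_ℂ).re ≤ eigDesc hAB j * (⟪x, x⟫_ℂ).re := by
    calc c * eigDesc hA.1 j * (⟪x, x⟫_ℂ).re
        = eigDesc hA.1 j * (c * (⟪x, x⟫_ℂ).re) := by ring
      _ ≤ eigDesc hA.1 j * (⟪x, Matrix.toEuclideanLin B x⟫_ℂ).re :=
          mul_le_mul_of_nonneg_left hlowB hg0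
      _ = eigDesc hA.1 j * (⟪z, z⟫_ℂ).re := by rw [heq2]
      _ ≤ (⟪z, Matrix.toEuclideanLin A z⟫_ℂ).re := hlowA
      _ = (⟪x, Matrix.toEuclideanLin (hB.sqrt * A * hB.sqrt) x⟫_ℂ).re := by rw [heq1]
      _ ≤ eigDesc hAB j * (⟪x, x⟫_ℂ).re := hup
  exact le_of_mul_le_mul_right hchain hxpos
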